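/- There exists an ∃GFG alternating Streett automaton A with transition conditions in disjunctive normal form such that Eve has no function σ : Σ⁺ → Boxes_A with the property that for every word w ∈ L(A), the box sequence (σ(w restricted to its first i+1 letters))_{i∈ℕ} is universally accepting for A; that is, Eve cannot resolve the nondeterminism of A based only on the word read so far. -/

import Mathlib

set_option autoImplicit false
set_option linter.unusedVariables false

/-! ### Positive Boolean formulas -/

inductive PosBool (Q : Type) : Type
  | atom : Q → PosBool Q
  | and : PosBool Q → PosBool Q → PosBool Q
  | or : PosBool Q → PosBool Q → PosBool Q

namespace PosBool

variable {Q : Type}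

/-- The possible outcomes of Eve resolving all the disjunctions of a positive
Boolean formula: each element of `eveRes φ` is the set of atoms that Adam can
reach (by resolving the conjunctions) against that fixed resolution of Eve.
These are exactly the `q`-boxes of the one-step game over the formula `φ`. -/
def eveRes : PosBool Q → Set (Set Q)
  | atom q => {{q}}
  | and f g => {s | ∃ u ∈ eveRes f, ∃ v ∈ eveRes g, s = u ∪ v}
  | or f g => eveRes f ∪ eveRes g

/-- The dual formula: swap disjunctions and conjunctions. -/
def dual : PosBool Q → PosBool Q
  | atom q => atom q
  | and f g => or (dual f) (dual g)
  | or f g => and (dual f) (dual g)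

/-- Length (number of nodes) of a formula. -/
def size : PosBool Q → ℕ
  | atom _ => 1
  | and f g => size f + size g + 1
  | or f g => size f + size g + 1

/-- Atoms occurring in a formula. -/
def atoms : PosBool Q → Set Q
  | atom q => {q}
  | and f g => atoms f ∪ atoms g
  | or f g => atoms f ∪ atoms g

/-- A purely conjunctive formula (no disjunctions). -/
def NoOr : PosBool Q → Prop
  | atom _ => True
  | and f g => NoOr f ∧ NoOr g
  | or _ _ => False

/-- A purely disjunctive formula (no conjunctions). -/
def NoAnd : PosBool Q → Prop
  | atom _ => True
  | and _ _ => False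
  | or f g => NoAnd f ∧ NoAnd g

/-- Disjunctive normal form: a disjunction of conjunctions. -/
def IsDNF : PosBool Q → Prop
  | or f g => IsDNF f ∧ IsDNF g
  | φ => NoOr φ

end PosBool

/-! ### Acceptance conditions -/

/-- `c` appears infinitely often in `f`. -/
def InfOften (f : ℕ → ℕ) (c : ℕ) : Prop := ∀ n, ∃ m, n ≤ m ∧ f m = c

/-- The parity condition: the highest value appearing infinitely often is even. -/
def ParityAccept (f : ℕ → ℕ) : Prop :=
  ∃ c, Even c ∧ InfOften f c ∧ ∀ d, InfOften f d → d ≤ c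

/-- The sequence `ρ` visits the set `S` infinitely often. -/
def InfOftenIn {T : Type} (ρ : ℕ → T) (S : Set T) : Prop := ∀ n, ∃ m, n ≤ m ∧ ρ m ∈ S

/-- A Rabin (or Streett) pair of sets of transitions. -/
structure RabinPair (T : Type) where
  bad : Set T
  good : Set T

/-- The Rabin condition for pairs `⟨B_i, G_i⟩`, `i < k`: for some `i`,
`inf(ρ) ∩ B_i = ∅` and `inf(ρ) ∩ G_i ≠ ∅`. -/
def RabinAccept {T : Type} {k : ℕ} (pairs : Fin k → RabinPair T) (ρ : ℕ → T) : Prop :=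
  ∃ i, ¬ InfOftenIn ρ (pairs i).bad ∧ InfOftenIn ρ (pairs i).good

/-- The Streett condition for pairs `⟨B_i, G_i⟩`, `i < k`: for every `i`,
`inf(ρ) ∩ B_i = ∅` or `inf(ρ) ∩ G_i ≠ ∅`. -/
def StreettAccept {T : Type} {k : ℕ} (pairs : Fin k → RabinPair T) (ρ : ℕ → T) : Prop :=
  ∀ i, ¬ InfOftenIn ρ (pairs i).bad ∨ InfOftenIn ρ (pairs i).good

/-! ### Generic two-player games of infinite duration.

A game proceeds in rounds; in each round, from the current game state, up to
six moves are played in alternation: Adam moves first (`a1`), then Eve (`e1`),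
then Adam (`a2`), then Eve (`e2`), then Adam (`a3`), then Eve (`e3`).
(Unused phases are modelled by the type `Unit`.)  Strategies may use the full
history of the play (the list of previous complete rounds) as well as the moves
already played in the current round.  Eve wins an infinite play iff the
sequence of rounds satisfies the winning condition `win`. -/

structure GameRound (St α1 β1 α2 β2 α3 β3 : Type) where
  st : St
  a1 : α1
  e1 : β1
  a2 : α2
  e2 : β2
  a3 : α3
  e3 : β3

structure Game (St α1 β1 α2 β2 α3 β3 : Type) where
  init : St
  A1 : St → Set α1
  E1 : St → α1 → Set β1
  A2 : St → α1 → β1 → Set α2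
  E2 : St → α1 → β1 → α2 → Set β2
  A3 : St → α1 → β1 → α2 → β2 → Set α3
  E3 : St → α1 → β1 → α2 → β2 → α3 → Set β3
  next : St → α1 → β1 → α2 → β2 → α3 → β3 → St
  win : (ℕ → GameRound St α1 β1 α2 β2 α3 β3) → Prop

namespace Game

variable {St α1 β1 α2 β2 α3 β3 : Type}

/-- The states along the play are correctly updated. -/
def StateOk (G : Game St α1 β1 α2 β2 α3 β3) (ρ : ℕ → GameRound St α1 β1 α2 β2 α3 β3) : Prop :=
  (ρ 0).st = G.init ∧
  ∀ n, (ρ (n+1)).st = G.next (ρ n).st (ρ n).a1 (ρ n).e1 (ρ n).a2 (ρ n).e2 (ρ n).a3 (ρ n).e3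

/-- Round `n` of the play is entirely legal. -/
def RoundLegal (G : Game St α1 β1 α2 β2 α3 β3) (ρ : ℕ → GameRound St α1 β1 α2 β2 α3 β3)
    (n : ℕ) : Prop :=
  (ρ n).a1 ∈ G.A1 (ρ n).st ∧
  (ρ n).e1 ∈ G.E1 (ρ n).st (ρ n).a1 ∧
  (ρ n).a2 ∈ G.A2 (ρ n).st (ρ n).a1 (ρ n).e1 ∧
  (ρ n).e2 ∈ G.E2 (ρ n).st (ρ n).a1 (ρ n).e1 (ρ n).a2 ∧
  (ρ n).a3 ∈ G.A3 (ρ n).st (ρ n).a1 (ρ n).e1 (ρ n).a2 (ρ n).e2 ∧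
  (ρ n).e3 ∈ G.E3 (ρ n).st (ρ n).a1 (ρ n).e1 (ρ n).a2 (ρ n).e2 (ρ n).a3

/-- All rounds before round `n` are entirely legal. -/
def Hleg (G : Game St α1 β1 α2 β2 α3 β3) (ρ : ℕ → GameRound St α1 β1 α2 β2 α3 β3)
    (n : ℕ) : Prop :=
  ∀ m, m < n → RoundLegal G ρ m

/-- Eve wins the play `ρ`: she is never the first player to make an illegal
move (the moves of each round are ordered `a1, e1, a2, e2, a3, e3`), and if all
moves are legal then the play satisfies the winning condition. -/
def EveWinsPlay (G : Game St α1 β1 α2 β2 α3 β3)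
    (ρ : ℕ → GameRound St α1 β1 α2 β2 α3 β3) : Prop :=
  (∀ n, Hleg G ρ n → (ρ n).a1 ∈ G.A1 (ρ n).st →
      (ρ n).e1 ∈ G.E1 (ρ n).st (ρ n).a1) ∧
  (∀ n, Hleg G ρ n → (ρ n).a1 ∈ G.A1 (ρ n).st →
      (ρ n).e1 ∈ G.E1 (ρ n).st (ρ n).a1 →
      (ρ n).a2 ∈ G.A2 (ρ n).st (ρ n).a1 (ρ n).e1 →
      (ρ n).e2 ∈ G.E2 (ρ n).st (ρ n).a1 (ρ n).e1 (ρ n).a2) ∧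
  (∀ n, Hleg G ρ n → (ρ n).a1 ∈ G.A1 (ρ n).st →
      (ρ n).e1 ∈ G.E1 (ρ n).st (ρ n).a1 →
      (ρ n).a2 ∈ G.A2 (ρ n).st (ρ n).a1 (ρ n).e1 →
      (ρ n).e2 ∈ G.E2 (ρ n).st (ρ n).a1 (ρ n).e1 (ρ n).a2 →
      (ρ n).a3 ∈ G.A3 (ρ n).st (ρ n).a1 (ρ n).e1 (ρ n).a2 (ρ n).e2 →
      (ρ n).e3 ∈ G.E3 (ρ n).st (ρ n).a1 (ρ n).e1 (ρ n).a2 (ρ n).e2 (ρ n).a3) ∧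
  ((∀ n, RoundLegal G ρ n) → G.win ρ)

/-- Adam wins the play `ρ`: he is never the first player to make an illegal
move, and if all moves are legal then the play violates the (Eve) winning
condition. -/
def AdamWinsPlay (G : Game St α1 β1 α2 β2 α3 β3)
    (ρ : ℕ → GameRound St α1 β1 α2 β2 α3 β3) : Prop :=
  (∀ n, Hleg G ρ n → (ρ n).a1 ∈ G.A1 (ρ n).st) ∧
  (∀ n, Hleg G ρ n → (ρ n).a1 ∈ G.A1 (ρ n).st →
      (ρ n).e1 ∈ G.E1 (ρ n).st (ρ n).a1 →
      (ρ n).a2 ∈ G.A2 (ρ n).st (ρ n).a1 (ρ n).e1) ∧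
  (∀ n, Hleg G ρ n → (ρ n).a1 ∈ G.A1 (ρ n).st →
      (ρ n).e1 ∈ G.E1 (ρ n).st (ρ n).a1 →
      (ρ n).a2 ∈ G.A2 (ρ n).st (ρ n).a1 (ρ n).e1 →
      (ρ n).e2 ∈ G.E2 (ρ n).st (ρ n).a1 (ρ n).e1 (ρ n).a2 →
      (ρ n).a3 ∈ G.A3 (ρ n).st (ρ n).a1 (ρ n).e1 (ρ n).a2 (ρ n).e2) ∧
  ((∀ n, RoundLegal G ρ n) → ¬ G.win ρ)

/-- The history of a play before round `n`: the list of the first `n` rounds. -/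
def hist (ρ : ℕ → GameRound St α1 β1 α2 β2 α3 β3) (n : ℕ) : List (GameRound St α1 β1 α2 β2 α3 β3) :=
  (List.range n).map ρ

/-- A strategy of Eve: for each of her three moves in a round, a choice
depending on the history, the current state, and the moves already played
in the current round. -/
structure EStrat (St α1 β1 α2 β2 α3 β3 : Type) where
  f1 : List (GameRound St α1 β1 α2 β2 α3 β3) → St → α1 → β1
  f2 : List (GameRound St α1 β1 α2 β2 α3 β3) → St → α1 → β1 → α2 → β2
  f3 : List (GameRound St α1 β1 α2 β2 α3 β3) → St → α1 → β1 → α2 → β2 → α3 → β3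

/-- A strategy of Adam. -/
structure AStrat (St α1 β1 α2 β2 α3 β3 : Type) where
  g1 : List (GameRound St α1 β1 α2 β2 α3 β3) → St → α1
  g2 : List (GameRound St α1 β1 α2 β2 α3 β3) → St → α1 → β1 → α2
  g3 : List (GameRound St α1 β1 α2 β2 α3 β3) → St → α1 → β1 → α2 → β2 → α3

/-- The play `ρ` is consistent with the strategy `σ` of Eve. -/
def ConsE (σ : EStrat St α1 β1 α2 β2 α3 β3) (ρ : ℕ → GameRound St α1 β1 α2 β2 α3 β3) : Prop :=
  ∀ n, (ρ n).e1 = σ.f1 (hist ρ n) (ρ n).st (ρ n).a1 ∧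
       (ρ n).e2 = σ.f2 (hist ρ n) (ρ n).st (ρ n).a1 (ρ n).e1 (ρ n).a2 ∧
       (ρ n).e3 = σ.f3 (hist ρ n) (ρ n).st (ρ n).a1 (ρ n).e1 (ρ n).a2 (ρ n).e2 (ρ n).a3

/-- The play `ρ` is consistent with the strategy `τ` of Adam. -/
def ConsA (τ : AStrat St α1 β1 α2 β2 α3 β3) (ρ : ℕ → GameRound St α1 β1 α2 β2 α3 β3) : Prop :=
  ∀ n, (ρ n).a1 = τ.g1 (hist ρ n) (ρ n).st ∧
       (ρ n).a2 = τ.g2 (hist ρ n) (ρ n).st (ρ n).a1 (ρ n).e1 ∧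
       (ρ n).a3 = τ.g3 (hist ρ n) (ρ n).st (ρ n).a1 (ρ n).e1 (ρ n).a2 (ρ n).e2

/-- `σ` is a winning strategy for Eve: every play consistent with `σ` is won
by Eve. -/
def EveWinningStrat (G : Game St α1 β1 α2 β2 α3 β3) (σ : EStrat St α1 β1 α2 β2 α3 β3) : Prop :=
  ∀ ρ, StateOk G ρ → ConsE σ ρ → EveWinsPlay G ρ

/-- Eve wins the game `G`. -/
def EveWins (G : Game St α1 β1 α2 β2 α3 β3) : Prop := ∃ σ, EveWinningStrat G σ

/-- `τ` is a winning strategy for Adam: every play consistent with `τ` is won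
by Adam. -/
def AdamWinningStrat (G : Game St α1 β1 α2 β2 α3 β3) (τ : AStrat St α1 β1 α2 β2 α3 β3) : Prop :=
  ∀ ρ, StateOk G ρ → ConsA τ ρ → AdamWinsPlay G ρ

/-- Adam wins the game `G`. -/
def AdamWins (G : Game St α1 β1 α2 β2 α3 β3) : Prop := ∃ τ, AdamWinningStrat G τ

end Game
/-! ### Alternating automata on infinite words -/

/-- An alternating automaton over the alphabet `A`: a set of states, an initial
state, a transition function assigning to each state and letter a positive
Boolean formula over the states, and an acceptance condition `acc` on infinite
sequences of transitions `(q_n, a_n, q_{n+1})`. -/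
structure AltAut (A : Type) where
  Q : Type
  init : Q
  delta : Q → A → PosBool Q
  acc : (ℕ → Q × A × Q) → Prop

namespace AltAut

variable {A : Type}

/-- `M` is a parity automaton with priority labelling `p`. -/
def IsParity (M : AltAut A) (p : M.Q → A → M.Q → ℕ) : Prop :=
  ∀ ρ, M.acc ρ ↔ ParityAccept fun n => p (ρ n).1 (ρ n).2.1 (ρ n).2.2

/-- `M` is a Rabin automaton with the Rabin pairs `pairs`. -/
def IsRabin (M : AltAut A) {k : ℕ} (pairs : Fin k → RabinPair (M.Q × A × M.Q)) : Prop :=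
  ∀ ρ, M.acc ρ ↔ RabinAccept pairs ρ

/-- `M` is a Streett automaton with the Streett pairs `pairs`. -/
def IsStreett (M : AltAut A) {k : ℕ} (pairs : Fin k → RabinPair (M.Q × A × M.Q)) : Prop :=
  ∀ ρ, M.acc ρ ↔ StreettAccept pairs ρ

/-- `M` is a Büchi automaton with accepting transitions `F`. -/
def IsBuchi (M : AltAut A) (F : Set (M.Q × A × M.Q)) : Prop :=
  ∀ ρ, M.acc ρ ↔ InfOftenIn ρ F

/-- `M` is a weak automaton (with parity labelling `p`): every path following
transitions of the automaton eventually remains in a single priority. -/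
def IsWeak (M : AltAut A) (p : M.Q → A → M.Q → ℕ) : Prop :=
  M.IsParity p ∧
  ∀ ρ : ℕ → M.Q × A × M.Q,
    (∀ n, (ρ n).2.2 = (ρ (n+1)).1 ∧ (ρ n).2.2 ∈ PosBool.atoms (M.delta (ρ n).1 (ρ n).2.1)) →
    ∃ N c, ∀ n, N ≤ n → p (ρ n).1 (ρ n).2.1 (ρ n).2.2 = c

/-- `M` is nondeterministic: all transition conditions are disjunctive. -/
def IsNondet (M : AltAut A) : Prop := ∀ q a, (M.delta q a).NoAnd

/-- `M` is universal: all transition conditions are conjunctive. -/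
def IsUniversal (M : AltAut A) : Prop := ∀ q a, (M.delta q a).NoOr

/-- The dual automaton: swap disjunctions and conjunctions, and dualise the
acceptance condition. -/
def dual (M : AltAut A) : AltAut A where
  Q := M.Q
  init := M.init
  delta q a := (M.delta q a).dual
  acc ρ := ¬ M.acc ρ

/-- The model-checking (acceptance) game of `M` over the word `w`.  A round
from state `q` at step `n`: Eve resolves the disjunctions of `δ(q, w_n)`
(choosing an element of `eveRes`), and Adam resolves the conjunctions
(choosing a state in that set).  Eve wins iff the resulting path of
transitions is accepting. -/
def mcGame (M : AltAut A) (w : ℕ → A) :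
    Game (ℕ × M.Q) Unit (Set M.Q) M.Q Unit Unit Unit where
  init := (0, M.init)
  A1 _ := Set.univ
  E1 p _ := PosBool.eveRes (M.delta p.2 (w p.1))
  A2 _ _ S := S
  E2 _ _ _ _ := Set.univ
  A3 _ _ _ _ _ := Set.univ
  E3 _ _ _ _ _ _ := Set.univ
  next p _ _ q' _ _ _ := (p.1 + 1, q')
  win ρ := M.acc fun n => ((ρ n).st.2, w n, (ρ n).a2)

/-- The language of `M`: the words for which Eve wins the model-checking game. -/
def Lang (M : AltAut A) : Set (ℕ → A) := {w | Game.EveWins (M.mcGame w)}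

/-- Eve's letter game on `M`: Adam picks a letter, then the one-step formula is
resolved (Eve the disjunctions, Adam the conjunctions).  Eve wins iff the word
played is not in `L(M)` or the path produced is accepting. -/
def eLetterGame (M : AltAut A) : Game M.Q A (Set M.Q) M.Q Unit Unit Unit where
  init := M.init
  A1 _ := Set.univ
  E1 q a := PosBool.eveRes (M.delta q a)
  A2 _ _ S := S
  E2 _ _ _ _ := Set.univ
  A3 _ _ _ _ _ := Set.univ
  E3 _ _ _ _ _ _ := Set.univ
  next _ _ _ q' _ _ _ := q'
  win ρ := (fun n => (ρ n).a1) ∉ M.Lang ∨ M.acc fun n => ((ρ n).st, (ρ n).a1, (ρ n).a2)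

/-- Adam's letter game on `M`: Eve picks a letter and resolves the disjunctions
of the one-step formula, Adam resolves the conjunctions.  Adam wins iff the
word played is in `L(M)` or the path produced is rejecting; accordingly the
condition `win` (for Eve) is that the word is not in `L(M)` and the path is
accepting. -/
def aLetterGame (M : AltAut A) : Game M.Q Unit (A × Set M.Q) M.Q Unit Unit Unit where
  init := M.init
  A1 _ := Set.univ
  E1 q _ := {m : A × Set M.Q | m.2 ∈ PosBool.eveRes (M.delta q m.1)}
  A2 _ _ m := m.2
  E2 _ _ _ _ := Set.univ
  A3 _ _ _ _ _ := Set.univ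
  E3 _ _ _ _ _ _ := Set.univ
  next _ _ _ q' _ _ _ := q'
  win ρ := (fun n => (ρ n).e1.1) ∉ M.Lang ∧ M.acc fun n => ((ρ n).st, (ρ n).e1.1, (ρ n).a2)

/-- `M` is ∃GFG: Eve wins her letter game. -/
def ExistsGFG (M : AltAut A) : Prop := Game.EveWins M.eLetterGame

/-- `M` is ∀GFG: Adam wins his letter game. -/
def ForallGFG (M : AltAut A) : Prop := Game.AdamWins M.aLetterGame

/-- `M` is good-for-games: it is both ∃GFG and ∀GFG. -/
def GFG (M : AltAut A) : Prop := M.ExistsGFG ∧ M.ForallGFG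

/-- `b` is a box of `M` over the letter `a`: a simultaneous resolution, for
every state `q`, of the disjunctions of `δ(q, a)`; `b q` is the set of states
Adam can reach from `q` against this resolution. -/
def IsBox (M : AltAut A) (a : A) (b : M.Q → Set M.Q) : Prop :=
  ∀ q, b q ∈ PosBool.eveRes (M.delta q a)

/-- The boxes of `M` (over all letters), as an alphabet. -/
def Boxes (M : AltAut A) : Type := {β : A × (M.Q → Set M.Q) // M.IsBox β.1 β.2}

/-- A sequence of (letter, box) pairs is universally accepting for `M` if every
path through it starting at the initial state is accepting. -/
def UnivAcceptingRaw (M : AltAut A) (u : ℕ → A × (M.Q → Set M.Q)) : Prop :=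
  ∀ ρ : ℕ → M.Q, ρ 0 = M.init → (∀ n, ρ (n+1) ∈ (u n).2 (ρ n)) →
    M.acc fun n => (ρ n, (u n).1, ρ (n+1))

/-- The set of universally accepting words over the alphabet of boxes of `M`. -/
def UnivAccLang (M : AltAut A) : Set (ℕ → M.Boxes) :=
  {u | M.UnivAcceptingRaw fun n => (u n).val}

/-- The size of an automaton: the maximum of the size of the alphabet, the
number of states and the total length of the transition conditions. -/
noncomputable def sizeN (M : AltAut A) : ℕ :=
  max (Nat.card A) (max (Nat.card M.Q) (∑ᶠ q : M.Q, ∑ᶠ a : A, (M.delta q a).size))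

/-- The two-token game `G₂(M)` on an alternating automaton `M`.  A configuration
is a triple of states `(p, q₁, q₂)`; in each turn Adam picks a letter `a`, the
players resolve `δ_M(p, a)` (Eve the disjunctions, Adam the conjunctions),
producing a transition of Eve's token, and then resolve `δ_{M̄}(q₁, a)` and
`δ_{M̄}(q₂, a)` in the dual automaton (Adam the disjunctions, Eve the
conjunctions), producing transitions of Adam's two tokens.  Eve wins iff her
path is accepting in `M`, or both of Adam's paths are rejecting in `M`. -/
def G2 (M : AltAut A) :
    Game (M.Q × M.Q × M.Q) A (Set M.Q) (M.Q × Set M.Q × Set M.Q) (M.Q × M.Q) Unit Unit where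
  init := (M.init, M.init, M.init)
  A1 _ := Set.univ
  E1 c a := PosBool.eveRes (M.delta c.1 a)
  A2 c a S := {m | m.1 ∈ S ∧ m.2.1 ∈ PosBool.eveRes (M.dual.delta c.2.1 a) ∧
                   m.2.2 ∈ PosBool.eveRes (M.dual.delta c.2.2 a)}
  E2 _ _ _ m := {x | x.1 ∈ m.2.1 ∧ x.2 ∈ m.2.2}
  A3 _ _ _ _ _ := Set.univ
  E3 _ _ _ _ _ _ := Set.univ
  next c _ _ m x _ _ := (m.1, x.1, x.2)
  win ρ :=
    M.acc (fun n => ((ρ n).st.1, (ρ n).a1, (ρ n).a2.1)) ∨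
    (¬ M.acc (fun n => ((ρ n).st.2.1, (ρ n).a1, (ρ n).e2.1)) ∧
     ¬ M.acc (fun n => ((ρ n).st.2.2, (ρ n).a1, (ρ n).e2.2)))

end AltAut

/-! ### Deterministic and nondeterministic parity automata -/

/-- A deterministic parity automaton over the alphabet `A` (priorities on
transitions). -/
structure DPA (A : Type) where
  S : Type
  init : S
  step : S → A → S
  prio : S → A → ℕ

namespace DPA

variable {A : Type}

/-- The (unique) run of `D` on `w`. -/
def run (D : DPA A) (w : ℕ → A) : ℕ → D.S
  | 0 => D.init
  | n + 1 => D.step (D.run w n) (w n)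

/-- The language of `D`. -/
def Lang (D : DPA A) : Set (ℕ → A) :=
  {w | ParityAccept fun n => D.prio (D.run w n) (w n)}

end DPA

/-- A nondeterministic parity automaton over the alphabet `A`, with an abstract
set `T` of transitions, each with a source, a letter, a destination and a
priority. -/
structure NPA (A : Type) where
  S : Type
  init : S
  T : Type
  src : T → S
  lab : T → A
  dst : T → S
  prio : T → ℕ

namespace NPA

variable {A : Type}

/-- `r` is a run of `N` over `w`. -/
def IsRun (N : NPA A) (w : ℕ → A) (r : ℕ → N.T) : Prop :=
  N.src (r 0) = N.init ∧ (∀ n, N.src (r (n+1)) = N.dst (r n)) ∧ ∀ n, N.lab (r n) = w n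

/-- The language of `N`: the words admitting an accepting run. -/
def Lang (N : NPA A) : Set (ℕ → A) :=
  {w | ∃ r, N.IsRun w r ∧ ParityAccept fun n => N.prio (r n)}

/-- The letter game on `N`: Adam picks letters, Eve picks transitions; Eve wins
iff the word played is not in `L(N)` or her run is accepting. -/
def letterGame (N : NPA A) : Game N.S A N.T Unit Unit Unit Unit where
  init := N.init
  A1 _ := Set.univ
  E1 s a := {t | N.src t = s ∧ N.lab t = a}
  A2 _ _ _ := Set.univ
  E2 _ _ _ _ := Set.univ
  A3 _ _ _ _ _ := Set.univ
  E3 _ _ _ _ _ _ := Set.univ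
  next _ _ t _ _ _ _ := N.dst t
  win ρ := (fun n => (ρ n).a1) ∉ N.Lang ∨ ParityAccept fun n => N.prio (ρ n).e1

/-- `N` is good-for-games. -/
def GFG (N : NPA A) : Prop := Game.EveWins N.letterGame

/-- The two-token game `G₂(N)` on a nondeterministic automaton `N`: Adam picks
a letter, Eve picks a transition for her token, Adam picks transitions for his
two tokens.  Eve wins iff her run is accepting or both of Adam's runs are
rejecting. -/
def G2 (N : NPA A) : Game (N.S × N.S × N.S) A N.T (N.T × N.T) Unit Unit Unit where
  init := (N.init, N.init, N.init)
  A1 _ := Set.univ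
  E1 c a := {t | N.src t = c.1 ∧ N.lab t = a}
  A2 c a _ := {m | N.src m.1 = c.2.1 ∧ N.lab m.1 = a ∧ N.src m.2 = c.2.2 ∧ N.lab m.2 = a}
  E2 _ _ _ _ := Set.univ
  A3 _ _ _ _ _ := Set.univ
  E3 _ _ _ _ _ _ := Set.univ
  next _ _ t m _ _ _ := (N.dst t, N.dst m.1, N.dst m.2)
  win ρ :=
    ParityAccept (fun n => N.prio (ρ n).e1) ∨
    (¬ ParityAccept (fun n => N.prio (ρ n).a2.1) ∧
     ¬ ParityAccept (fun n => N.prio (ρ n).a2.2))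

end NPA

/-- The nondeterministic parity automaton `A^□` obtained from an alternating
automaton `M` and a deterministic parity automaton `B` over the alphabet of
boxes of `M`: upon reading a letter `a`, it nondeterministically chooses a box
of `M` over `a` and follows the transition of `B` over that box. -/
def boxNPA {A : Type} (M : AltAut A) (B : DPA M.Boxes) : NPA A where
  S := B.S
  init := B.init
  T := B.S × M.Boxes
  src t := t.1
  lab t := t.2.val.1
  dst t := B.step t.1 t.2
  prio t := B.prio t.1 t.2

/-! ### Word-based (positional) strategies in the expanded letter game

In the expanded letter game, positions record the whole finite word played so
far; a positional strategy of Eve therefore depends only on the word read so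
far and the current state.  Such a strategy is given by a function
`f : List A → M.Q → Set M.Q`, where `f (w ++ [a]) q` is Eve's resolution of
the disjunctions of `δ(q, a)` after the word `w ++ [a]` has been played. -/

/-- `f` is a valid word-based strategy: it always chooses resolutions of the
current one-step formula. -/
def WordStratValid {A : Type} (M : AltAut A) (f : List A → M.Q → Set M.Q) : Prop :=
  ∀ (l : List A) (a : A) (q : M.Q), f (l ++ [a]) q ∈ PosBool.eveRes (M.delta q a)

/-- The strategy of Eve in the letter game induced by a word-based strategy:
it only looks at the sequence of letters played so far and the current state. -/
def wordStrat {A : Type} (M : AltAut A) (f : List A → M.Q → Set M.Q) :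
    Game.EStrat M.Q A (Set M.Q) M.Q Unit Unit Unit where
  f1 h q a := f ((h.map fun r => r.a1) ++ [a]) q
  f2 _ _ _ _ _ := ()
  f3 _ _ _ _ _ _ _ := ()

/-- The prefix of length `n` of an infinite word. -/
def wordPref {A : Type} (w : ℕ → A) (n : ℕ) : List A := (List.range n).map w

/-! ### Auxiliary construction for Statement 16 -/

namespace Stmt16

inductive St : Type
  | s | c1 | c2 | q | r1 | r2
deriving DecidableEq

instance : Fintype St :=
  ⟨{St.s, St.c1, St.c2, St.q, St.r1, St.r2}, by intro x; cases x <;> simp⟩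

def deltaSt : St → PosBool St
  | .s => .and (.atom .c1) (.atom .c2)
  | .c1 => .atom .q
  | .c2 => .atom .q
  | .q => .or (.atom .r1) (.atom .r2)
  | .r1 => .atom .s
  | .r2 => .atom .s

def pairs : Fin 2 → RabinPair (St × Unit × St) := fun i =>
  if i.val = 0 then ⟨{(St.s, (), St.c2)}, {(St.q, (), St.r2)}⟩
  else ⟨{(St.q, (), St.r2)}, {(St.s, (), St.c2)}⟩

abbrev M : AltAut Unit where
  Q := St
  init := St.s
  delta st _ := deltaSt st
  acc ρ := StreettAccept pairs ρ

example : (pairs 0).bad = {(St.s, (), St.c2)} := rfl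
example : (pairs 1).bad = {(St.q, (), St.r2)} := rfl

def eveChoice (prev : Option St) (cur : St) : Set St :=
  match cur with
  | .s => {St.c1, St.c2}
  | .c1 => {St.q}
  | .c2 => {St.q}
  | .q => if prev = some St.c2 then {St.r2} else {St.r1}
  | .r1 => {St.s}
  | .r2 => {St.s}

lemma eveChoice_mem (p : Option St) (cur : St) (a : Unit) :
    eveChoice p cur ∈ PosBool.eveRes (M.delta cur a) := by
  cases cur
  · exact ⟨{St.c1}, rfl, {St.c2}, rfl, Set.singleton_union.symm⟩
  · rfl
  · rfl
  · by_cases h : p = some St.c2 <;> simp [eveChoice, h, M, deltaSt, PosBool.eveRes]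
  · rfl
  · rfl

lemma core_accept (st : ℕ → St) (h0 : st 0 = St.s)
    (h1 : st 1 ∈ eveChoice none (st 0))
    (hstep : ∀ n, st (n + 2) ∈ eveChoice (some (st n)) (st (n + 1))) :
    StreettAccept pairs (fun n => (st n, (), st (n + 1))) := by
  have step1 : ∀ m, st m = St.s → st (m + 1) = St.c1 ∨ st (m + 1) = St.c2 := by
    intro m hm
    cases m with
    | zero => rw [hm] at h1; simpa [eveChoice] using h1
    | succ k =>
      have h := hstep k
      rw [hm] at h
      simpa [eveChoice] using h
  have stepC : ∀ m, (st m = St.c1 ∨ st m = St.c2) → st (m + 1) = St.q := by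
    intro m hm
    cases m with
    | zero => rcases hm with h | h <;> rw [h0] at h <;> simp at h
    | succ k =>
      have h := hstep k
      rcases hm with hc | hc <;> rw [hc] at h <;> simpa [eveChoice] using h
  have block : ∀ m, st m = St.s → st (m + 2) = St.q ∧
      ((st (m + 1) = St.c1 ∧ st (m + 3) = St.r1) ∨
        (st (m + 1) = St.c2 ∧ st (m + 3) = St.r2)) ∧
      st (m + 4) = St.s := by
    intro m hm
    have h1' := step1 m hm
    have h2 : st (m + 2) = St.q := stepC (m + 1) h1'
    have h3 : st (m + 3) ∈ eveChoice (some (st (m + 1))) (st (m + 2)) := hstep (m + 1)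
    have h4 : st (m + 4) ∈ eveChoice (some (st (m + 2))) (st (m + 3)) := hstep (m + 2)
    rw [h2] at h3 h4
    rcases h1' with hc | hc
    · rw [hc] at h3
      have h3' : st (m + 3) = St.r1 := by simpa [eveChoice] using h3
      rw [h3'] at h4
      exact ⟨h2, Or.inl ⟨hc, h3'⟩, by simpa [eveChoice] using h4⟩
    · rw [hc] at h3
      have h3' : st (m + 3) = St.r2 := by simpa [eveChoice] using h3
      rw [h3'] at h4
      exact ⟨h2, Or.inr ⟨hc, h3'⟩, by simpa [eveChoice] using h4⟩
  have key : ∀ n, st (4 * n) = St.s ∧ st (4 * n + 2) = St.q ∧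
      ((st (4 * n + 1) = St.c1 ∧ st (4 * n + 3) = St.r1) ∨
        (st (4 * n + 1) = St.c2 ∧ st (4 * n + 3) = St.r2)) ∧
      st (4 * n + 4) = St.s := by
    intro n
    induction n with
    | zero =>
      have b := block 0 h0
      exact ⟨h0, b.1, b.2.1, b.2.2⟩
    | succ k ih =>
      have hs : st (4 * k + 4) = St.s := ih.2.2.2
      have b := block (4 * k + 4) hs
      exact ⟨hs, b.1, b.2.1, b.2.2⟩
  have stS : ∀ m, st m = St.s → ∃ k, m = 4 * k := by
    intro m hm
    obtain ⟨k, hk | hk | hk | hk⟩ :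
        ∃ k, m = 4 * k ∨ m = 4 * k + 1 ∨ m = 4 * k + 2 ∨ m = 4 * k + 3 := ⟨m / 4, by omega⟩
    · exact ⟨k, hk⟩
    · subst hk
      rcases (key k).2.2.1 with ⟨h, -⟩ | ⟨h, -⟩ <;> rw [h] at hm <;> simp at hm
    · subst hk; rw [(key k).2.1] at hm; simp at hm
    · subst hk
      rcases (key k).2.2.1 with ⟨-, h⟩ | ⟨-, h⟩ <;> rw [h] at hm <;> simp at hm
  have stQ : ∀ m, st m = St.q → ∃ k, m = 4 * k + 2 := by
    intro m hm
    obtain ⟨k, hk | hk | hk | hk⟩ :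
        ∃ k, m = 4 * k ∨ m = 4 * k + 1 ∨ m = 4 * k + 2 ∨ m = 4 * k + 3 := ⟨m / 4, by omega⟩
    · subst hk; rw [(key k).1] at hm; simp at hm
    · subst hk
      rcases (key k).2.2.1 with ⟨h, -⟩ | ⟨h, -⟩ <;> rw [h] at hm <;> simp at hm
    · exact ⟨k, hk⟩
    · subst hk
      rcases (key k).2.2.1 with ⟨-, h⟩ | ⟨-, h⟩ <;> rw [h] at hm <;> simp at hm
  have bad_to_good : ∀ m, st m = St.s → st (m + 1) = St.c2 →
      st (m + 2) = St.q ∧ st (m + 3) = St.r2 := by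
    intro m hm hm1
    obtain ⟨k, rfl⟩ := stS m hm
    rcases (key k).2.2.1 with ⟨h, -⟩ | ⟨-, hr⟩
    · rw [h] at hm1; simp at hm1
    · exact ⟨(key k).2.1, hr⟩
  have good_to_bad : ∀ m, st m = St.q → st (m + 1) = St.r2 →
      ∃ k, m = 4 * k + 2 ∧ st (4 * k) = St.s ∧ st (4 * k + 1) = St.c2 := by
    intro m hm hm1
    obtain ⟨k, rfl⟩ := stQ m hm
    have hm1' : st (4 * k + 3) = St.r2 := hm1
    rcases (key k).2.2.1 with ⟨-, h⟩ | ⟨hc, -⟩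
    · rw [h] at hm1'; simp at hm1'
    · exact ⟨k, rfl, (key k).1, hc⟩
  have fwd : InfOftenIn (fun n => (st n, (), st (n + 1))) {(St.s, (), St.c2)} →
      InfOftenIn (fun n => (st n, (), st (n + 1))) {(St.q, (), St.r2)} := by
    intro h n
    obtain ⟨m, hmn, hmem⟩ := h n
    have hmem' : (st m, (), st (m + 1)) = ((St.s, (), St.c2) : St × Unit × St) := hmem
    simp only [Prod.mk.injEq] at hmem'
    obtain ⟨hs, -, hc⟩ := hmem'
    obtain ⟨hq, hr⟩ := bad_to_good m hs hc
    refine ⟨m + 2, by omega, ?_⟩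
    show (st (m + 2), (), st (m + 2 + 1)) = ((St.q, (), St.r2) : St × Unit × St)
    have hr' : st (m + 2 + 1) = St.r2 := hr
    rw [hq, hr']
  have bwd : InfOftenIn (fun n => (st n, (), st (n + 1))) {(St.q, (), St.r2)} →
      InfOftenIn (fun n => (st n, (), st (n + 1))) {(St.s, (), St.c2)} := by
    intro h n
    obtain ⟨m, hmn, hmem⟩ := h (n + 2)
    have hmem' : (st m, (), st (m + 1)) = ((St.q, (), St.r2) : St × Unit × St) := hmem
    simp only [Prod.mk.injEq] at hmem'
    obtain ⟨hq, -, hr⟩ := hmem'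
    obtain ⟨k, rfl, hs, hc⟩ := good_to_bad m hq hr
    refine ⟨4 * k, by omega, ?_⟩
    show (st (4 * k), (), st (4 * k + 1)) = ((St.s, (), St.c2) : St × Unit × St)
    rw [hs, hc]
  intro i
  rcases i with ⟨iv, hiv⟩
  interval_cases iv
  · by_cases hb : InfOftenIn (fun n => (st n, (), st (n + 1))) {(St.s, (), St.c2)}
    · exact Or.inr (fwd hb)
    · exact Or.inl hb
  · by_cases hb : InfOftenIn (fun n => (st n, (), st (n + 1))) {(St.q, (), St.r2)}
    · exact Or.inr (bwd hb)
    · exact Or.inl hb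


lemma hist_getLast {S1 α1 β1 α2 β2 α3 β3 : Type} (ρ : ℕ → GameRound S1 α1 β1 α2 β2 α3 β3)
    (n : ℕ) : (Game.hist ρ (n + 1)).getLast? = some (ρ n) := by
  simp [Game.hist, List.range_succ]

def sigE : Game.EStrat St Unit (Set St) St Unit Unit Unit where
  f1 h st _ := eveChoice (h.getLast?.map (fun r => r.st)) st
  f2 _ _ _ _ _ := ()
  f3 _ _ _ _ _ _ _ := ()

lemma gfg : M.ExistsGFG := by
  refine ⟨sigE, ?_⟩
  intro ρ hok hcons
  refine ⟨?_, ?_, ?_, ?_⟩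
  · intro n _ _
    rw [(hcons n).1]
    exact eveChoice_mem _ _ _
  · intro n _ _ _ _; exact Set.mem_univ _
  · intro n _ _ _ _ _ _; exact Set.mem_univ _
  · intro hall
    refine Or.inr ?_
    have h1 : (ρ 1).st ∈ eveChoice none (ρ 0).st := by
      have hmem := (hall 0).2.2.1
      rw [(hcons 0).1] at hmem
      have hmem' : (ρ 0).a2 ∈
          eveChoice ((Game.hist ρ 0).getLast?.map (fun r => r.st)) ((ρ 0).st) := hmem
      have h2 : (ρ 1).st = (ρ 0).a2 := hok.2 0
      rw [h2]; exact hmem'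
    have hstep : ∀ n, (ρ (n + 2)).st ∈ eveChoice (some ((ρ n).st)) ((ρ (n + 1)).st) := by
      intro n
      have hmem := (hall (n + 1)).2.2.1
      rw [(hcons (n + 1)).1] at hmem
      have hmem' : (ρ (n + 1)).a2 ∈
          eveChoice ((Game.hist ρ (n + 1)).getLast?.map (fun r => r.st)) ((ρ (n + 1)).st) := hmem
      rw [hist_getLast] at hmem'
      have h2 : (ρ (n + 2)).st = (ρ (n + 1)).a2 := hok.2 (n + 1)
      rw [h2]; exact hmem'
    have hacc := core_accept (fun n => (ρ n).st) hok.1 h1 hstep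
    have he : (fun n => ((ρ n).st, (ρ n).a1, (ρ n).a2)) =
        (fun n => ((ρ n).st, (), (ρ (n + 1)).st)) := by
      funext n
      have h2 : (ρ (n + 1)).st = (ρ n).a2 := hok.2 n
      rw [h2]
    show M.acc _
    rw [he]
    exact hacc

def sigM : Game.EStrat (ℕ × St) Unit (Set St) St Unit Unit Unit where
  f1 h p _ := eveChoice (h.getLast?.map (fun r => r.st.2)) p.2
  f2 _ _ _ _ _ := ()
  f3 _ _ _ _ _ _ _ := ()

abbrev wUnit : ℕ → Unit := fun _ => ()

lemma lang_mem : wUnit ∈ M.Lang := by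
  refine ⟨sigM, ?_⟩
  intro ρ hok hcons
  refine ⟨?_, ?_, ?_, ?_⟩
  · intro n _ _
    rw [(hcons n).1]
    exact eveChoice_mem _ _ _
  · intro n _ _ _ _; exact Set.mem_univ _
  · intro n _ _ _ _ _ _; exact Set.mem_univ _
  · intro hall
    have h1 : (ρ 1).st.2 ∈ eveChoice none ((ρ 0).st.2) := by
      have hmem := (hall 0).2.2.1
      rw [(hcons 0).1] at hmem
      have hmem' : (ρ 0).a2 ∈
          eveChoice ((Game.hist ρ 0).getLast?.map (fun r => r.st.2)) ((ρ 0).st.2) := hmem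
      have h2 : (ρ 1).st.2 = (ρ 0).a2 := congrArg Prod.snd (hok.2 0)
      rw [h2]; exact hmem'
    have hstep : ∀ n, (ρ (n + 2)).st.2 ∈ eveChoice (some ((ρ n).st.2)) ((ρ (n + 1)).st.2) := by
      intro n
      have hmem := (hall (n + 1)).2.2.1
      rw [(hcons (n + 1)).1] at hmem
      have hmem' : (ρ (n + 1)).a2 ∈
          eveChoice ((Game.hist ρ (n + 1)).getLast?.map (fun r => r.st.2)) ((ρ (n + 1)).st.2) := hmem
      rw [hist_getLast] at hmem'
      have h2 : (ρ (n + 2)).st.2 = (ρ (n + 1)).a2 := congrArg Prod.snd (hok.2 (n + 1))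
      rw [h2]; exact hmem'
    have hacc := core_accept (fun n => (ρ n).st.2) (congrArg Prod.snd hok.1) h1 hstep
    have he : (fun n => ((ρ n).st.2, wUnit n, (ρ n).a2)) =
        (fun n => ((ρ n).st.2, (), (ρ (n + 1)).st.2)) := by
      funext n
      have h2 : (ρ (n + 1)).st.2 = (ρ n).a2 := congrArg Prod.snd (hok.2 n)
      rw [h2]
    show M.acc _
    rw [he]
    exact hacc

lemma wordPref_succ (n : ℕ) : wordPref wUnit n ++ [()] = wordPref wUnit (n + 1) := by
  simp [wordPref, List.range_succ]

open Classical in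
/-- The adversarial path against a word-based box strategy `f`, where Adam
always branches to `c` (which should be `c1` or `c2`). -/
noncomputable def adv (f : List Unit → St → Set St) (c : St) (m : ℕ) : St :=
  if m % 4 = 0 then St.s
  else if m % 4 = 1 then c
  else if m % 4 = 2 then St.q
  else if f (wordPref wUnit (4 * (m / 4) + 3)) St.q = ({St.r2} : Set St) then St.r2 else St.r1

section AdvEval

variable (f : List Unit → St → Set St) (c : St)

lemma adv0 (k : ℕ) : adv f c (4 * k) = St.s := by
  simp [adv, Nat.mul_mod_right]

lemma adv1 (k : ℕ) : adv f c (4 * k + 1) = c := by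
  have h : (4 * k + 1) % 4 = 1 := by omega
  simp [adv, h]

lemma adv2 (k : ℕ) : adv f c (4 * k + 2) = St.q := by
  have h : (4 * k + 2) % 4 = 2 := by omega
  simp [adv, h]

open Classical in
lemma adv3 (k : ℕ) : adv f c (4 * k + 3) =
    if f (wordPref wUnit (4 * k + 3)) St.q = ({St.r2} : Set St) then St.r2 else St.r1 := by
  have h : (4 * k + 3) % 4 = 3 := by omega
  have h2 : (4 * k + 3) / 4 = k := by omega
  simp [adv, h, h2]

lemma adv4 (k : ℕ) : adv f c (4 * k + 4) = St.s := by
  have h : (4 * k + 4) % 4 = 0 := by omega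
  simp [adv, h]

end AdvEval

end Stmt16
/-! ### Statement 16

There exists an ∃GFG alternating Streett automaton `A`, with transition
conditions in disjunctive normal form, such that Eve has no function
`σ : Σ⁺ → Boxes_A` (choosing, for each nonempty finite word, a box over its
last letter) with the property that for every word `w ∈ L(A)`, the box
sequence `(σ(w ↾ (i+1)))_i` is universally accepting for `A`: Eve cannot
resolve the nondeterminism of `A` based only on the word read so far. -/

theorem streett_no_word_based_box_strategy :
    ∃ (Alph : Type) (M : AltAut Alph),
      Finite Alph ∧ Finite M.Q ∧
      (∃ (k : ℕ) (pairs : Fin k → RabinPair (M.Q × Alph × M.Q)), M.IsStreett pairs) ∧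
      (∀ q a, (M.delta q a).IsDNF) ∧
      M.ExistsGFG ∧
      ¬ ∃ f : List Alph → M.Q → Set M.Q,
          WordStratValid M f ∧
          ∀ w ∈ M.Lang,
            M.UnivAcceptingRaw fun i => (w i, f (wordPref w (i + 1))) := by
  classical
  open Stmt16 in
  refine ⟨Unit, Stmt16.M, inferInstance, inferInstanceAs (Finite Stmt16.St),
    ⟨2, Stmt16.pairs, fun ρ => Iff.rfl⟩, ?_, Stmt16.gfg, ?_⟩
  · intro st a
    cases st <;> first | exact trivial | exact ⟨trivial, trivial⟩
  · rintro ⟨f, hvalid, huniv⟩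
    -- pin down the values of the word-based strategy
    have hbox : ∀ (n : ℕ) (st' : Stmt16.St),
        f (wordPref wUnit (n + 1)) st' ∈ PosBool.eveRes (Stmt16.deltaSt st') := by
      intro n st'
      have h := hvalid (wordPref wUnit n) () st'
      rw [wordPref_succ] at h
      exact h
    have hbQ : ∀ n, f (wordPref wUnit (n + 1)) St.q = {St.r1} ∨
        f (wordPref wUnit (n + 1)) St.q = {St.r2} := fun n => hbox n St.q
    have hbS : ∀ n, f (wordPref wUnit (n + 1)) St.s = {St.c1} ∪ {St.c2} := by
      intro n
      obtain ⟨u, hu, v, hv, h⟩ := hbox n St.s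
      have hu' : u = {St.c1} := hu
      have hv' : v = {St.c2} := hv
      rw [h, hu', hv']
    have hbC1 : ∀ n, f (wordPref wUnit (n + 1)) St.c1 = {St.q} := fun n => hbox n St.c1
    have hbC2 : ∀ n, f (wordPref wUnit (n + 1)) St.c2 = {St.q} := fun n => hbox n St.c2
    have hbR1 : ∀ n, f (wordPref wUnit (n + 1)) St.r1 = {St.s} := fun n => hbox n St.r1
    have hbR2 : ∀ n, f (wordPref wUnit (n + 1)) St.r2 = {St.s} := fun n => hbox n St.r2
    -- the adversarial path follows the boxes chosen by `f`
    have hstep : ∀ c, c = St.c1 ∨ c = St.c2 → ∀ m,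
        adv f c (m + 1) ∈ f (wordPref wUnit (m + 1)) (adv f c m) := by
      intro c hc m
      obtain ⟨k, hk | hk | hk | hk⟩ :
          ∃ k, m = 4 * k ∨ m = 4 * k + 1 ∨ m = 4 * k + 2 ∨ m = 4 * k + 3 :=
        ⟨m / 4, by omega⟩
      · subst hk
        show adv f c (4 * k + 1) ∈ f (wordPref wUnit (4 * k + 1)) (adv f c (4 * k))
        rw [adv0, adv1, hbS]
        rcases hc with rfl | rfl
        · exact Or.inl rfl
        · exact Or.inr rfl
      · subst hk
        show adv f c (4 * k + 2) ∈ f (wordPref wUnit (4 * k + 2)) (adv f c (4 * k + 1))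
        rw [adv1, adv2]
        have hc1 : f (wordPref wUnit (4 * k + 2)) St.c1 = {St.q} := hbC1 (4 * k + 1)
        have hc2 : f (wordPref wUnit (4 * k + 2)) St.c2 = {St.q} := hbC2 (4 * k + 1)
        rcases hc with rfl | rfl
        · rw [hc1]; rfl
        · rw [hc2]; rfl
      · subst hk
        show adv f c (4 * k + 3) ∈ f (wordPref wUnit (4 * k + 3)) (adv f c (4 * k + 2))
        rw [adv2, adv3]
        by_cases hcond : f (wordPref wUnit (4 * k + 3)) St.q = ({St.r2} : Set St)
        · rw [if_pos hcond, hcond]; rfl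
        · rw [if_neg hcond]
          have hq : f (wordPref wUnit (4 * k + 3)) St.q = {St.r1} ∨
              f (wordPref wUnit (4 * k + 3)) St.q = {St.r2} := hbQ (4 * k + 2)
          rcases hq with h | h
          · rw [h]; rfl
          · exact absurd h hcond
      · subst hk
        show adv f c (4 * k + 4) ∈ f (wordPref wUnit (4 * k + 4)) (adv f c (4 * k + 3))
        rw [adv3]
        have h4 : adv f c (4 * k + 4) = St.s := adv4 f c k
        rw [h4]
        by_cases hcond : f (wordPref wUnit (4 * k + 3)) St.q = ({St.r2} : Set St)
        · rw [if_pos hcond]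
          have hr : f (wordPref wUnit (4 * k + 4)) St.r2 = {St.s} := hbR2 (4 * k + 3)
          rw [hr]; rfl
        · rw [if_neg hcond]
          have hr : f (wordPref wUnit (4 * k + 4)) St.r1 = {St.s} := hbR1 (4 * k + 3)
          rw [hr]; rfl
    have h0 : ∀ c, adv f c 0 = Stmt16.M.init := fun c => adv0 f c 0
    by_cases H : ∀ N, ∃ k, N ≤ k ∧ f (wordPref wUnit (4 * k + 3)) St.q = ({St.r2} : Set St)
    · -- Eve's boxes choose `r2` infinitely often: Adam always branches to `c1`
      have hacc := huniv wUnit lang_mem (adv f St.c1) (h0 St.c1)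
        (fun n => hstep St.c1 (Or.inl rfl) n)
      have hpair := hacc ⟨1, by omega⟩
      have hbadinf : InfOftenIn (fun n => (adv f St.c1 n, wUnit n, adv f St.c1 (n + 1)))
          {(St.q, (), St.r2)} := by
        intro N
        obtain ⟨k, hk, hcond⟩ := H N
        refine ⟨4 * k + 2, by omega, ?_⟩
        show (adv f St.c1 (4 * k + 2), (), adv f St.c1 (4 * k + 2 + 1)) =
          ((St.q, (), St.r2) : St × Unit × St)
        have h3 : adv f St.c1 (4 * k + 2 + 1) = St.r2 := by
          have h := adv3 f St.c1 k
          rw [if_pos hcond] at h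
          exact h
        rw [adv2, h3]
      have hgoodfin : ¬ InfOftenIn (fun n => (adv f St.c1 n, wUnit n, adv f St.c1 (n + 1)))
          {(St.s, (), St.c2)} := by
        intro h
        obtain ⟨m, -, hmem⟩ := h 0
        have hmem' : (adv f St.c1 m, (), adv f St.c1 (m + 1)) =
            ((St.s, (), St.c2) : St × Unit × St) := hmem
        simp only [Prod.mk.injEq] at hmem'
        obtain ⟨h1, -, h2⟩ := hmem'
        obtain ⟨k, hk | hk | hk | hk⟩ :
            ∃ k, m = 4 * k ∨ m = 4 * k + 1 ∨ m = 4 * k + 2 ∨ m = 4 * k + 3 :=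
          ⟨m / 4, by omega⟩
        · subst hk
          rw [adv1] at h2
          simp at h2
        · subst hk; rw [adv1] at h1; simp at h1
        · subst hk; rw [adv2] at h1; simp at h1
        · subst hk
          rw [adv3] at h1
          split at h1 <;> simp at h1
      rcases hpair with hnb | hg
      · exact hnb hbadinf
      · exact hgoodfin hg
    · -- Eve's boxes eventually always choose `r1`: Adam always branches to `c2`
      have H2 : ∃ N, ∀ k, N ≤ k →
          ¬ f (wordPref wUnit (4 * k + 3)) St.q = ({St.r2} : Set St) := by
        by_contra hc
        apply H
        intro N
        by_contra hk
        exact hc ⟨N, fun k hkN hP => hk ⟨k, hkN, hP⟩⟩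
      obtain ⟨N, hN'⟩ := H2
      have hacc := huniv wUnit lang_mem (adv f St.c2) (h0 St.c2)
        (fun n => hstep St.c2 (Or.inr rfl) n)
      have hpair := hacc ⟨0, by omega⟩
      have hbadinf : InfOftenIn (fun n => (adv f St.c2 n, wUnit n, adv f St.c2 (n + 1)))
          {(St.s, (), St.c2)} := by
        intro N'
        refine ⟨4 * N', by omega, ?_⟩
        show (adv f St.c2 (4 * N'), (), adv f St.c2 (4 * N' + 1)) =
          ((St.s, (), St.c2) : St × Unit × St)
        rw [adv0, adv1]
      have hgoodfin : ¬ InfOftenIn (fun n => (adv f St.c2 n, wUnit n, adv f St.c2 (n + 1)))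
          {(St.q, (), St.r2)} := by
        intro h
        obtain ⟨m, hm, hmem⟩ := h (4 * N + 3)
        have hmem' : (adv f St.c2 m, (), adv f St.c2 (m + 1)) =
            ((St.q, (), St.r2) : St × Unit × St) := hmem
        simp only [Prod.mk.injEq] at hmem'
        obtain ⟨h1, -, h2⟩ := hmem'
        obtain ⟨k, hk | hk | hk | hk⟩ :
            ∃ k, m = 4 * k ∨ m = 4 * k + 1 ∨ m = 4 * k + 2 ∨ m = 4 * k + 3 :=
          ⟨m / 4, by omega⟩
        · subst hk; rw [adv0] at h1; simp at h1
        · subst hk; rw [adv1] at h1; simp at h1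
        · subst hk
          have h2' : adv f St.c2 (4 * k + 3) = St.r2 := h2
          rw [adv3, if_neg (hN' k (by omega))] at h2'
          simp at h2'
        · subst hk; rw [adv3] at h1; split at h1 <;> simp at h1
      rcases hpair with hnb | hg
      · exact hnb hbadinf
      · exact hgoodfin hg
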